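/- For every fixed σ > 0 and γ > 0, the function μ ↦ R(μ) = (1/π)∫₀^π 1(E_{μ,σ}(θ) ≤ γ) dθ attains its global minimum over [0, ∞) at some point μ* ∈ [0, ∞), and this minimum value is strictly positive: R(μ*) > 0. In fact, for every μ ≥ 0 and γ > 0 one has R(μ) > 0. -/

import Mathlib

open Classical MeasureTheory ProbabilityTheory

/-- `Φ`, the standard Gaussian cumulative distribution function. -/
noncomputable def Phi (x : ℝ) : ℝ := ((gaussianReal 0 1) (Set.Iic x)).toReal

/-- `E_{μ,σ}(θ)`: reducible error of the affine classifier `sign(sin(θ)x + cos(θ))` for the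
antipodal equal-prior mixture of `N(−μ, σ²)` and `N(μ, σ²)`. -/
noncomputable def redErr (μ σ θ : ℝ) : ℝ :=
  Phi (μ / σ) - (1 / 2) * Phi ((μ * Real.sin θ - Real.cos θ) / (σ * Real.sin θ))
    - (1 / 2) * Phi ((μ * Real.sin θ + Real.cos θ) / (σ * Real.sin θ))

/-- `R(μ) = (1/π) ∫₀^π 1(E_{μ,σ}(θ) ≤ γ) dθ`, the Rashomon ratio. -/
noncomputable def rashRatio (σ γ μ : ℝ) : ℝ :=
  (1 / Real.pi) * ∫ θ in (0 : ℝ)..Real.pi, (if redErr μ σ θ ≤ γ then (1 : ℝ) else 0)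


open Filter Topology Set

noncomputable def FF (σ γ μ : ℝ) : ℝ :=
  ∫ θ in (0:ℝ)..Real.pi, (if redErr μ σ θ ≤ γ then (1:ℝ) else 0)


lemma pdf_cont : Continuous (gaussianPDFReal 0 1) := by
  unfold gaussianPDFReal; continuity

lemma sqrt_two_pi_ge : (2:ℝ) ≤ Real.sqrt (2 * Real.pi * ((1:NNReal):ℝ)) := by
  have h4 : (4:ℝ) ≤ 2 * Real.pi * ((1:NNReal):ℝ) := by
    push_cast; nlinarith [Real.pi_gt_three]
  calc (2:ℝ) = Real.sqrt 4 := by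
        rw [show (4:ℝ) = 2^2 by norm_num, Real.sqrt_sq (by norm_num : (0:ℝ) ≤ 2)]
    _ ≤ _ := Real.sqrt_le_sqrt h4

lemma pdf_le_half (x : ℝ) : gaussianPDFReal 0 1 x ≤ 1 / 2 := by
  unfold gaussianPDFReal
  have h1 : Real.exp (-(x - 0) ^ 2 / (2 * ((1:NNReal):ℝ))) ≤ 1 := by
    rw [Real.exp_le_one_iff]
    push_cast
    nlinarith [sq_nonneg (x - 0)]
  have h2 : (Real.sqrt (2 * Real.pi * ((1:NNReal):ℝ)))⁻¹ ≤ 1/2 := by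
    rw [inv_le_comm₀ (by positivity) (by norm_num)]
    simpa using sqrt_two_pi_ge
  have h0 : (0:ℝ) < (Real.sqrt (2 * Real.pi * ((1:NNReal):ℝ)))⁻¹ := by positivity
  calc (Real.sqrt (2 * Real.pi * ((1:NNReal):ℝ)))⁻¹ * Real.exp (-(x - 0) ^ 2 / (2 * ((1:NNReal):ℝ)))
      ≤ (Real.sqrt (2 * Real.pi * ((1:NNReal):ℝ)))⁻¹ * 1 := by
        exact mul_le_mul_of_nonneg_left h1 h0.le
    _ ≤ 1/2 := by rw [mul_one]; exact h2

lemma pdf_even (x : ℝ) : gaussianPDFReal 0 1 (-x) = gaussianPDFReal 0 1 x := by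
  unfold gaussianPDFReal; ring_nf

lemma pdf_lt_pdf {x y : ℝ} (h : y^2 < x^2) : gaussianPDFReal 0 1 x < gaussianPDFReal 0 1 y := by
  unfold gaussianPDFReal
  have h0 : (0:ℝ) < (Real.sqrt (2 * Real.pi * ((1:NNReal):ℝ)))⁻¹ := by positivity
  apply mul_lt_mul_of_pos_left _ h0
  apply Real.exp_lt_exp.mpr
  push_cast
  nlinarith

lemma Phi_eq (x : ℝ) : Phi x = ∫ t in Iic x, gaussianPDFReal 0 1 t := by
  unfold Phi
  rw [gaussianReal_apply_eq_integral 0 one_ne_zero, ENNReal.toReal_ofReal]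
  exact setIntegral_nonneg measurableSet_Iic fun t _ => gaussianPDFReal_nonneg 0 1 t

lemma Phi_sub {a b : ℝ} (hab : a ≤ b) :
    Phi b - Phi a = ∫ t in a..b, gaussianPDFReal 0 1 t := by
  rw [Phi_eq, Phi_eq, intervalIntegral.integral_of_le hab]
  have hint := integrable_gaussianPDFReal 0 1
  rw [← Set.Iic_union_Ioc_eq_Iic hab,
    setIntegral_union (Set.Iic_disjoint_Ioc le_rfl) measurableSet_Ioc
      hint.integrableOn hint.integrableOn]
  ring


lemma pdf_intble (a b : ℝ) : IntervalIntegrable (gaussianPDFReal 0 1) volume a b :=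
  (integrable_gaussianPDFReal 0 1).intervalIntegrable

lemma Phi_mono : Monotone Phi := by
  intro a b hab
  have := Phi_sub hab
  have h2 : 0 ≤ ∫ t in a..b, gaussianPDFReal 0 1 t :=
    intervalIntegral.integral_nonneg hab fun t _ => gaussianPDFReal_nonneg 0 1 t
  linarith

lemma Phi_strictMono : StrictMono Phi := by
  intro a b hab
  have := Phi_sub hab.le
  have h2 : 0 < ∫ t in a..b, gaussianPDFReal 0 1 t :=
    intervalIntegral.intervalIntegral_pos_of_pos (pdf_intble a b)
      (fun t => gaussianPDFReal_pos 0 1 t one_ne_zero) hab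
  linarith

lemma Phi_lip {a b : ℝ} (hab : a ≤ b) : Phi b - Phi a ≤ (b - a) / 2 := by
  rw [Phi_sub hab]
  calc (∫ t in a..b, gaussianPDFReal 0 1 t) ≤ ∫ _t in a..b, (1:ℝ)/2 :=
        intervalIntegral.integral_mono_on hab (pdf_intble a b)
          intervalIntegrable_const (fun t _ => pdf_le_half t)
    _ = (b - a) / 2 := by simp [smul_eq_mul]; ring

lemma Phi_cont : Continuous Phi := by
  apply LipschitzWith.continuous (K := (1:NNReal)/2)
  apply LipschitzWith.of_dist_le_mul
  intro x y
  rcases le_total x y with h | h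
  · rw [Real.dist_eq, Real.dist_eq, abs_of_nonpos (by have := Phi_mono h; linarith),
      abs_of_nonpos (by linarith)]
    have := Phi_lip h
    push_cast
    linarith
  · rw [Real.dist_eq, Real.dist_eq, abs_of_nonneg (by have := Phi_mono h; linarith),
      abs_of_nonneg (by linarith)]
    have := Phi_lip h
    push_cast
    linarith

lemma Phi_nonneg (x : ℝ) : 0 ≤ Phi x := ENNReal.toReal_nonneg

lemma Phi_le_one (x : ℝ) : Phi x ≤ 1 := by
  unfold Phi
  rw [show (1:ℝ) = (1:ENNReal).toReal by simp]
  exact ENNReal.toReal_mono ENNReal.one_ne_top prob_le_one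

lemma Phi_total : Integrable (gaussianPDFReal 0 1) := integrable_gaussianPDFReal 0 1

lemma Phi_add_neg (x : ℝ) : Phi x + Phi (-x) = 1 := by
  have h1 : Phi (-x) = ∫ t in Ioi x, gaussianPDFReal 0 1 t := by
    rw [Phi_eq]
    rw [← integral_comp_neg_Ioi]
    exact setIntegral_congr_fun measurableSet_Ioi fun t _ => pdf_even t
  have h2 : Phi x = ∫ t in Iic x, gaussianPDFReal 0 1 t := Phi_eq x
  have h3 : (∫ t in Iic x, gaussianPDFReal 0 1 t) + ∫ t in Ioi x, gaussianPDFReal 0 1 t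
      = ∫ t, gaussianPDFReal 0 1 t := by
    rw [← setIntegral_union (Set.Iic_disjoint_Ioi le_rfl) measurableSet_Ioi
      Phi_total.integrableOn Phi_total.integrableOn, Set.Iic_union_Ioi,
      setIntegral_univ]
  rw [h1, h2, h3, integral_gaussianPDFReal_eq_one 0 one_ne_zero]

lemma Phi_zero : Phi 0 = 1/2 := by
  have := Phi_add_neg 0
  simp at this
  linarith


/-- Strict concentration: for `m > 0`, `Phi (m+t) + Phi (m−t)` is strictly decreasing in `t ≥ 0`. -/
lemma sum_strictAnti {m t₁ t₂ : ℝ} (hm : 0 < m) (ht₁ : 0 ≤ t₁) (h12 : t₁ < t₂) :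
    Phi (m + t₂) + Phi (m - t₂) < Phi (m + t₁) + Phi (m - t₁) := by
  have key : (∫ x in (m+t₁)..(m+t₂), gaussianPDFReal 0 1 x)
      < ∫ x in (m+t₁)..(m+t₂), gaussianPDFReal 0 1 (2*m - x) := by
    apply intervalIntegral.integral_lt_integral_of_continuousOn_of_le_of_exists_lt
      (by linarith) (pdf_cont.continuousOn) ((pdf_cont.comp (by continuity)).continuousOn)
    · intro x hx
      have hx1 : m < x := by have := hx.1; linarith
      apply (pdf_lt_pdf _).le
      nlinarith
    · refine ⟨m + t₂, right_mem_Icc.mpr (by linarith), pdf_lt_pdf ?_⟩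
      nlinarith
  have e1 : (∫ x in (m+t₁)..(m+t₂), gaussianPDFReal 0 1 (2*m - x))
      = ∫ x in (m-t₂)..(m-t₁), gaussianPDFReal 0 1 x := by
    have := intervalIntegral.integral_comp_sub_left (a := m+t₁) (b := m+t₂)
      (gaussianPDFReal 0 1) (2*m)
    convert this using 2 <;> ring
  rw [e1, ← Phi_sub (by linarith), ← Phi_sub (by linarith)] at key
  linarith


lemma Phi_sub_le (a b : ℝ) : Phi a - Phi b ≤ |a - b| := by
  rcases le_total a b with h | h
  · have := Phi_mono h; have := abs_nonneg (a - b); linarith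
  · have h1 := Phi_lip h
    have h2 : |a - b| = a - b := abs_of_nonneg (by linarith)
    linarith

lemma redErr_eq {σ θ : ℝ} (μ : ℝ) (hσ : σ ≠ 0) (hs : Real.sin θ ≠ 0) :
    redErr μ σ θ = Phi (μ/σ) - (1/2) * Phi (μ/σ - Real.cos θ/(σ*Real.sin θ))
      - (1/2) * Phi (μ/σ + Real.cos θ/(σ*Real.sin θ)) := by
  have h1 : (μ * Real.sin θ - Real.cos θ)/(σ*Real.sin θ) = μ/σ - Real.cos θ/(σ*Real.sin θ) := by
    field_simp
  have h2 : (μ * Real.sin θ + Real.cos θ)/(σ*Real.sin θ) = μ/σ + Real.cos θ/(σ*Real.sin θ) := by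
    field_simp
  unfold redErr; rw [h1, h2]

lemma redErr_sin_zero {σ θ : ℝ} (μ : ℝ) (hs : Real.sin θ = 0) :
    redErr μ σ θ = Phi (μ/σ) - 1/2 := by
  unfold redErr; rw [hs]; simp [Phi_zero]; ring

lemma redErr_le_half {μ σ : ℝ} (hσ : 0 < σ) (hμ : 0 ≤ μ) (θ : ℝ) :
    redErr μ σ θ ≤ Phi (μ/σ) - 1/2 := by
  by_cases hs : Real.sin θ = 0
  · rw [redErr_sin_zero μ hs]
  · rw [redErr_eq μ hσ.ne' hs]
    set c := Real.cos θ/(σ*Real.sin θ)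
    have hm : 0 ≤ μ/σ := by positivity
    have h1 : Phi (-(μ/σ - c)) ≤ Phi (μ/σ + c) := Phi_mono (by linarith)
    have h2 := Phi_add_neg (μ/σ - c)
    linarith

lemma redErr_le_abs {μ σ θ : ℝ} (hσ : σ ≠ 0) (hs : Real.sin θ ≠ 0) :
    redErr μ σ θ ≤ |Real.cos θ/(σ*Real.sin θ)| := by
  rw [redErr_eq μ hσ hs]
  set c := Real.cos θ/(σ*Real.sin θ)
  set m := μ/σ
  have h1 : Phi m - Phi (m - c) ≤ |c| := by
    have := Phi_sub_le m (m - c); simpa using this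
  have h2 : Phi m - Phi (m + c) ≤ |c| := by
    have := Phi_sub_le m (m + c)
    have e : |m - (m+c)| = |c| := by rw [show m - (m+c) = -c by ring, abs_neg]
    linarith [e ▸ this]
  linarith

lemma redErr_le_decay {μ σ θ C : ℝ} (hσ : σ ≠ 0) (hs : Real.sin θ ≠ 0)
    (hC : |Real.cos θ/(σ*Real.sin θ)| ≤ C) :
    redErr μ σ θ ≤ 1 - Phi (μ/σ - C) := by
  rw [redErr_eq μ hσ hs]
  set c := Real.cos θ/(σ*Real.sin θ)
  have hc1 : -C ≤ c := by have := neg_abs_le c; linarith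
  have hc2 : c ≤ C := le_trans (le_abs_self c) hC
  have h1 : Phi (μ/σ - C) ≤ Phi (μ/σ - c) := Phi_mono (by linarith)
  have h2 : Phi (μ/σ - C) ≤ Phi (μ/σ + c) := Phi_mono (by linarith)
  have := Phi_le_one (μ/σ)
  linarith

lemma redErr_cont_in_mu (σ θ : ℝ) : Continuous (fun μ => redErr μ σ θ) := by
  unfold redErr
  apply Continuous.sub
  apply Continuous.sub
  · exact Phi_cont.comp (continuous_id.div_const σ)
  · exact continuous_const.mul (Phi_cont.comp
      (((continuous_id.mul continuous_const).sub continuous_const).div_const _))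
  · exact continuous_const.mul (Phi_cont.comp
      (((continuous_id.mul continuous_const).add continuous_const).div_const _))

lemma redErr_meas (μ σ : ℝ) : Measurable (fun θ => redErr μ σ θ) := by
  unfold redErr
  have m1 : Measurable fun θ : ℝ => (μ * Real.sin θ - Real.cos θ) / (σ * Real.sin θ) :=
    ((continuous_const.mul Real.continuous_sin).sub Real.continuous_cos).measurable.div
      ((continuous_const.mul Real.continuous_sin).measurable)
  have m2 : Measurable fun θ : ℝ => (μ * Real.sin θ + Real.cos θ) / (σ * Real.sin θ) :=
    ((continuous_const.mul Real.continuous_sin).add Real.continuous_cos).measurable.div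
      ((continuous_const.mul Real.continuous_sin).measurable)
  exact ((measurable_const.sub ((Phi_cont.measurable.comp m1).const_mul _)).sub
    ((Phi_cont.measurable.comp m2).const_mul _))


lemma key1 {μ σ : ℝ} (hσ : 0 < σ) (hμ : 0 < μ) {θ₁ θ₂ : ℝ}
    (h1 : θ₁ ∈ Ioo 0 (Real.pi/2)) (h2 : θ₂ ∈ Ioo 0 (Real.pi/2)) (h12 : θ₁ < θ₂) :
    redErr μ σ θ₂ < redErr μ σ θ₁ := by
  have hpi := Real.pi_pos
  have hs1 : 0 < Real.sin θ₁ := Real.sin_pos_of_pos_of_lt_pi h1.1 (by linarith [h1.2])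
  have hs2 : 0 < Real.sin θ₂ := Real.sin_pos_of_pos_of_lt_pi h2.1 (by linarith [h2.2])
  have hc1 : 0 < Real.cos θ₁ := Real.cos_pos_of_mem_Ioo ⟨by linarith [h1.1], h1.2⟩
  have hc2 : 0 < Real.cos θ₂ := Real.cos_pos_of_mem_Ioo ⟨by linarith [h2.1], h2.2⟩
  have hsin : Real.sin θ₁ < Real.sin θ₂ := by
    apply Real.strictMonoOn_sin ⟨by linarith [h1.1], by linarith [h1.2]⟩
      ⟨by linarith [h2.1], by linarith [h2.2]⟩ h12
  have hcos : Real.cos θ₂ < Real.cos θ₁ := by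
    apply Real.strictAntiOn_cos ⟨h1.1.le, by linarith [h1.2]⟩ ⟨h2.1.le, by linarith [h2.2]⟩ h12
  have hct : Real.cos θ₂/(σ*Real.sin θ₂) < Real.cos θ₁/(σ*Real.sin θ₁) := by
    rw [div_lt_div_iff₀ (by positivity) (by positivity)]
    calc Real.cos θ₂ * (σ * Real.sin θ₁) < Real.cos θ₁ * (σ * Real.sin θ₁) :=
          mul_lt_mul_of_pos_right hcos (by positivity)
      _ ≤ Real.cos θ₁ * (σ * Real.sin θ₂) :=
          mul_le_mul_of_nonneg_left (mul_le_mul_of_nonneg_left hsin.le hσ.le) hc1.le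
  have hm : 0 < μ/σ := by positivity
  have ht : 0 ≤ Real.cos θ₂/(σ*Real.sin θ₂) := by positivity
  have := sum_strictAnti hm ht hct
  rw [redErr_eq μ hσ.ne' hs1.ne', redErr_eq μ hσ.ne' hs2.ne']
  set a := μ/σ + Real.cos θ₁/(σ*Real.sin θ₁)
  linarith

lemma key2 {μ σ : ℝ} (hσ : 0 < σ) (hμ : 0 < μ) {θ₁ θ₂ : ℝ}
    (h1 : θ₁ ∈ Ioo (Real.pi/2) Real.pi) (h2 : θ₂ ∈ Ioo (Real.pi/2) Real.pi) (h12 : θ₁ < θ₂) :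
    redErr μ σ θ₁ < redErr μ σ θ₂ := by
  have hpi := Real.pi_pos
  have hs1 : 0 < Real.sin θ₁ := Real.sin_pos_of_pos_of_lt_pi (by linarith [h1.1]) h1.2
  have hs2 : 0 < Real.sin θ₂ := Real.sin_pos_of_pos_of_lt_pi (by linarith [h2.1]) h2.2
  have hc1 : Real.cos θ₁ < 0 := Real.cos_neg_of_pi_div_two_lt_of_lt h1.1 (by linarith [h1.2])
  have hc2 : Real.cos θ₂ < 0 := Real.cos_neg_of_pi_div_two_lt_of_lt h2.1 (by linarith [h2.2])
  have hsin : Real.sin θ₂ < Real.sin θ₁ := by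
    have m1 : θ₁ - Real.pi/2 ∈ Icc 0 Real.pi := ⟨by linarith [h1.1], by linarith [h1.2]⟩
    have m2 : θ₂ - Real.pi/2 ∈ Icc 0 Real.pi := ⟨by linarith [h2.1], by linarith [h2.2]⟩
    have := Real.strictAntiOn_cos m1 m2 (by linarith)
    rwa [Real.cos_sub_pi_div_two, Real.cos_sub_pi_div_two] at this
  have hcos : Real.cos θ₂ < Real.cos θ₁ :=
    Real.strictAntiOn_cos ⟨by linarith [h1.1], h1.2.le⟩ ⟨by linarith [h2.1], h2.2.le⟩ h12
  -- t i = -cos θi/(σ sin θi) > 0, t₁ < t₂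
  have hct : -Real.cos θ₁/(σ*Real.sin θ₁) < -Real.cos θ₂/(σ*Real.sin θ₂) := by
    rw [div_lt_div_iff₀ (by positivity) (by positivity)]
    calc -Real.cos θ₁ * (σ * Real.sin θ₂) < -Real.cos θ₂ * (σ * Real.sin θ₂) :=
          mul_lt_mul_of_pos_right (by linarith) (by positivity)
      _ ≤ -Real.cos θ₂ * (σ * Real.sin θ₁) :=
          mul_le_mul_of_nonneg_left (mul_le_mul_of_nonneg_left hsin.le hσ.le) (by linarith)
  have hm : 0 < μ/σ := by positivity
  have ht : 0 ≤ -Real.cos θ₁/(σ*Real.sin θ₁) := div_nonneg (by linarith) (by positivity)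
  have hsum := sum_strictAnti hm ht hct
  rw [redErr_eq μ hσ.ne' hs1.ne', redErr_eq μ hσ.ne' hs2.ne']
  have e1 : μ/σ - Real.cos θ₁/(σ*Real.sin θ₁) = μ/σ + -Real.cos θ₁/(σ*Real.sin θ₁) := by ring
  have e2 : μ/σ + Real.cos θ₁/(σ*Real.sin θ₁) = μ/σ - -Real.cos θ₁/(σ*Real.sin θ₁) := by ring
  have e3 : μ/σ - Real.cos θ₂/(σ*Real.sin θ₂) = μ/σ + -Real.cos θ₂/(σ*Real.sin θ₂) := by ring
  have e4 : μ/σ + Real.cos θ₂/(σ*Real.sin θ₂) = μ/σ - -Real.cos θ₂/(σ*Real.sin θ₂) := by ring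
  rw [e1, e2, e3, e4]
  linarith

lemma null_crossing {μ σ : ℝ} (hσ : 0 < σ) (hμ : 0 < μ) (γ : ℝ) :
    volume {θ | θ ∈ Ioc 0 Real.pi ∧ redErr μ σ θ = γ} = 0 := by
  have hpi := Real.pi_pos
  set A₁ := Ioo 0 (Real.pi/2) ∩ {θ | redErr μ σ θ = γ}
  set A₂ := Ioo (Real.pi/2) Real.pi ∩ {θ | redErr μ σ θ = γ}
  have hA₁ : A₁.Subsingleton := by
    intro x hx y hy
    by_contra hne
    rcases lt_or_gt_of_ne hne with h | h
    · exact absurd (hx.2.trans hy.2.symm) (key1 hσ hμ hx.1 hy.1 h).ne'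
    · exact absurd (hy.2.trans hx.2.symm) (key1 hσ hμ hy.1 hx.1 h).ne'
  have hA₂ : A₂.Subsingleton := by
    intro x hx y hy
    by_contra hne
    rcases lt_or_gt_of_ne hne with h | h
    · exact absurd (hx.2.trans hy.2.symm) (key2 hσ hμ hx.1 hy.1 h).ne
    · exact absurd (hy.2.trans hx.2.symm) (key2 hσ hμ hy.1 hx.1 h).ne
  have hsub : {θ | θ ∈ Ioc 0 Real.pi ∧ redErr μ σ θ = γ}
      ⊆ A₁ ∪ A₂ ∪ {Real.pi/2, Real.pi} := by
    rintro θ ⟨⟨h0, hp⟩, he⟩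
    rcases lt_trichotomy θ (Real.pi/2) with h | h | h
    · exact Or.inl (Or.inl ⟨⟨h0, h⟩, he⟩)
    · exact Or.inr (Or.inl h)
    · rcases eq_or_lt_of_le hp with h' | h'
      · exact Or.inr (Or.inr h')
      · exact Or.inl (Or.inr ⟨⟨h, h'⟩, he⟩)
  refine measure_mono_null hsub ?_
  refine measure_union_null (measure_union_null (hA₁.measure_zero volume) (hA₂.measure_zero volume)) ?_
  refine measure_union_null (measure_singleton _) (measure_singleton _)


lemma ind_meas (μ σ γ : ℝ) :
    Measurable (fun θ => if redErr μ σ θ ≤ γ then (1:ℝ) else 0) :=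
  Measurable.ite (measurableSet_le (redErr_meas μ σ) measurable_const)
    measurable_const measurable_const

lemma ind_intble (μ σ γ a b : ℝ) :
    IntervalIntegrable (fun θ => if redErr μ σ θ ≤ γ then (1:ℝ) else 0) volume a b := by
  apply IntervalIntegrable.mono_fun' (g := fun _ => (1:ℝ)) intervalIntegrable_const
    (ind_meas μ σ γ).aestronglyMeasurable
  refine Eventually.of_forall fun θ => ?_
  by_cases h : redErr μ σ θ ≤ γ <;> simp [h]

lemma FF_le_pi (σ γ μ : ℝ) : FF σ γ μ ≤ Real.pi := by
  have h := intervalIntegral.integral_mono_on (μ := volume) Real.pi_pos.le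
    (ind_intble μ σ γ 0 Real.pi) intervalIntegrable_const
    (g := fun _ => (1:ℝ)) (fun θ _ => by by_cases h : redErr μ σ θ ≤ γ <;> simp [h])
  simpa [FF] using h

lemma FF_nonneg (σ γ μ : ℝ) : 0 ≤ FF σ γ μ :=
  intervalIntegral.integral_nonneg Real.pi_pos.le
    (fun θ _ => by by_cases h : redErr μ σ θ ≤ γ <;> simp [h])

lemma FF_lower {σ γ μ a b : ℝ} (ha : 0 ≤ a) (hab : a ≤ b) (hb : b ≤ Real.pi)
    (h : ∀ θ ∈ Icc a b, redErr μ σ θ ≤ γ) : b - a ≤ FF σ γ μ := by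
  set f := fun θ => if redErr μ σ θ ≤ γ then (1:ℝ) else 0
  have e1 : (∫ θ in (0:ℝ)..a, f θ) + (∫ θ in a..b, f θ) = ∫ θ in (0:ℝ)..b, f θ :=
    intervalIntegral.integral_add_adjacent_intervals (ind_intble μ σ γ 0 a) (ind_intble μ σ γ a b)
  have e2 : (∫ θ in (0:ℝ)..b, f θ) + (∫ θ in b..Real.pi, f θ) = FF σ γ μ :=
    intervalIntegral.integral_add_adjacent_intervals (ind_intble μ σ γ 0 b)
      (ind_intble μ σ γ b Real.pi)
  have n1 : 0 ≤ ∫ θ in (0:ℝ)..a, f θ :=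
    intervalIntegral.integral_nonneg ha
      (fun θ _ => by by_cases h : redErr μ σ θ ≤ γ <;> simp [f, h])
  have n2 : 0 ≤ ∫ θ in b..Real.pi, f θ :=
    intervalIntegral.integral_nonneg hb
      (fun θ _ => by by_cases h : redErr μ σ θ ≤ γ <;> simp [f, h])
  have e3 : (∫ θ in a..b, f θ) = b - a := by
    rw [show (b - a : ℝ) = ∫ _θ in a..b, (1:ℝ) by simp]
    apply intervalIntegral.integral_congr
    intro θ hθ
    rw [uIcc_of_le hab] at hθ
    exact if_pos (h θ hθ)
  linarith

lemma Phi_tendsto_one : Tendsto Phi atTop (𝓝 1) := by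
  have h := tendsto_measure_Iic_atTop (μ := gaussianReal 0 1)
  rw [measure_univ] at h
  have h2 : Tendsto ENNReal.toReal (𝓝 1) (𝓝 (1:ENNReal).toReal) :=
    ENNReal.tendsto_toReal ENNReal.one_ne_top
  have h3 : Tendsto Phi atTop (𝓝 (1:ENNReal).toReal) := h2.comp h
  simpa using h3

lemma FF_contAt {σ γ μ₀ : ℝ} (hσ : 0 < σ) (hμ₀ : 0 < μ₀) :
    ContinuousAt (FF σ γ) μ₀ := by
  apply intervalIntegral.tendsto_integral_filter_of_dominated_convergence
    (bound := fun _ => (1:ℝ))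
  · exact Eventually.of_forall fun μ => (ind_meas μ σ γ).aestronglyMeasurable
  · refine Eventually.of_forall fun μ => Eventually.of_forall fun θ => ?_
    by_cases h : redErr μ σ θ ≤ γ <;> simp [h]
  · exact intervalIntegrable_const
  · have hmeasset : MeasurableSet {a : ℝ | ¬redErr μ₀ σ a ≠ γ} := by
      simp only [not_not]
      exact redErr_meas μ₀ σ (measurableSet_singleton γ)
    have hne : ∀ᵐ θ ∂(volume.restrict (uIoc 0 Real.pi)), redErr μ₀ σ θ ≠ γ := by
      rw [ae_iff, Measure.restrict_apply hmeasset]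
      refine measure_mono_null ?_ (null_crossing hσ hμ₀ γ)
      intro θ hθ
      rw [uIoc_of_le Real.pi_pos.le] at hθ
      exact ⟨hθ.2, not_not.mp hθ.1⟩
    rw [ae_restrict_iff' measurableSet_uIoc] at hne
    filter_upwards [hne] with θ hθ hmem
    have hg : redErr μ₀ σ θ ≠ γ := hθ hmem
    have hcont : ContinuousAt (fun μ => redErr μ σ θ) μ₀ := (redErr_cont_in_mu σ θ).continuousAt
    rcases lt_or_gt_of_ne hg with hlt | hgt
    · have hev : ∀ᶠ μ in 𝓝 μ₀, redErr μ σ θ < γ := hcont.eventually_lt continuousAt_const hlt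
      rw [if_pos hlt.le]
      refine Tendsto.congr' ?_ (tendsto_const_nhds (x := (1:ℝ)))
      filter_upwards [hev] with μ hμ
      rw [if_pos hμ.le]
    · have hev : ∀ᶠ μ in 𝓝 μ₀, γ < redErr μ σ θ := continuousAt_const.eventually_lt hcont hgt
      rw [if_neg (not_le.mpr hgt)]
      refine Tendsto.congr' ?_ (tendsto_const_nhds (x := (0:ℝ)))
      filter_upwards [hev] with μ hμ
      rw [if_neg (not_le.mpr hμ)]


lemma rashRatio_eq (σ γ μ : ℝ) : rashRatio σ γ μ = (1/Real.pi) * FF σ γ μ := rfl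

/-- sin is at least `sin δ` on `[δ, π - δ]` for `0 < δ ≤ π/2`. -/
lemma sin_lower {δ θ : ℝ} (hδ : 0 < δ) (hδ2 : δ ≤ Real.pi/2) (hθ : θ ∈ Icc δ (Real.pi - δ)) :
    Real.sin δ ≤ Real.sin θ := by
  have hpi := Real.pi_pos
  rcases le_total θ (Real.pi/2) with h | h
  · exact Real.sin_le_sin_of_le_of_le_pi_div_two (by linarith) h hθ.1
  · rw [← Real.sin_pi_sub θ]
    exact Real.sin_le_sin_of_le_of_le_pi_div_two (by linarith) (by linarith) (by linarith [hθ.2])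

/-- Around `π/2`, the reducible error is at most `γ`. -/
lemma redErr_small {μ σ γ : ℝ} (hσ : 0 < σ) (hγ : 0 < γ) {θ : ℝ}
    (hθ : θ ∈ Icc (Real.pi/2 - min (σ*γ/2) (Real.pi/4)) (Real.pi/2 + min (σ*γ/2) (Real.pi/4))) :
    redErr μ σ θ ≤ γ := by
  have hpi := Real.pi_pos
  set η := min (σ*γ/2) (Real.pi/4) with hη
  have hη0 : 0 < η := lt_min (by positivity) (by positivity)
  have hη4 : η ≤ Real.pi/4 := min_le_right _ _
  have hησγ : η ≤ σ*γ/2 := min_le_left _ _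
  have hs : Real.sin θ ≥ 1/2 := by
    have h1 : Real.sin θ ≥ Real.sin (Real.pi/4) := by
      apply sin_lower (by positivity) (by linarith) ⟨by linarith [hθ.1], by linarith [hθ.2]⟩
    have h2 : Real.sin (Real.pi/4) = Real.sqrt 2 / 2 := Real.sin_pi_div_four
    nlinarith [Real.sqrt_nonneg 2, Real.sq_sqrt (by norm_num : (0:ℝ) ≤ 2)]
  have hspos : 0 < Real.sin θ := by linarith
  have hcos : |Real.cos θ| ≤ η := by
    have h1 : Real.cos θ = Real.sin (Real.pi/2 - θ) := (Real.sin_pi_div_two_sub θ).symm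
    rw [h1]
    calc |Real.sin (Real.pi/2 - θ)| ≤ |Real.pi/2 - θ| := Real.abs_sin_le_abs
      _ ≤ η := abs_le.mpr ⟨by linarith [hθ.2], by linarith [hθ.1]⟩
  calc redErr μ σ θ ≤ |Real.cos θ/(σ*Real.sin θ)| := redErr_le_abs hσ.ne' hspos.ne'
    _ = |Real.cos θ|/(σ*Real.sin θ) := by
        rw [abs_div, abs_of_pos (show (0:ℝ) < σ*Real.sin θ by positivity)]
    _ ≤ η/(σ*(1/2)) := by
        apply div_le_div₀ hη0.le hcos (by positivity)
        nlinarith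
    _ ≤ γ := by rw [div_le_iff₀ (by positivity)]; nlinarith

lemma FF_pos {σ γ : ℝ} (hσ : 0 < σ) (hγ : 0 < γ) (μ : ℝ) : 0 < FF σ γ μ := by
  have hpi := Real.pi_pos
  set η := min (σ*γ/2) (Real.pi/4) with hη
  have hη0 : 0 < η := lt_min (by positivity) (by positivity)
  have hη4 : η ≤ Real.pi/4 := min_le_right _ _
  have h := FF_lower (σ := σ) (γ := γ) (μ := μ) (a := Real.pi/2 - η) (b := Real.pi/2 + η)
    (by linarith) (by linarith) (by linarith)
    (fun θ hθ => redErr_small hσ hγ hθ)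
  linarith

lemma rash_pos {σ γ : ℝ} (hσ : 0 < σ) (hγ : 0 < γ) (μ : ℝ) : 0 < rashRatio σ γ μ := by
  rw [rashRatio_eq]
  have := FF_pos hσ hγ μ
  have hpi := Real.pi_pos
  positivity

lemma rash_le {σ γ x y : ℝ} (h : FF σ γ x ≤ FF σ γ y) : rashRatio σ γ x ≤ rashRatio σ γ y := by
  rw [rashRatio_eq, rashRatio_eq]
  have hpi := Real.pi_pos
  apply mul_le_mul_of_nonneg_left h (by positivity)


/-- For fixed `σ > 0` and `γ > 0`, the Rashomon ratio `μ ↦ R(μ)` attains a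
global minimum over `[0, ∞)` at some `μ* ≥ 0`, the minimum value is strictly positive, and
in fact `R(μ) > 0` for every `μ ≥ 0`. -/
theorem rashRatio_attains_positive_minimum
    (σ γ : ℝ) (hσ : 0 < σ) (hγ : 0 < γ) :
    (∃ μstar : ℝ, 0 ≤ μstar ∧
      (∀ μ : ℝ, 0 ≤ μ → rashRatio σ γ μstar ≤ rashRatio σ γ μ) ∧
      0 < rashRatio σ γ μstar) ∧
    (∀ μ : ℝ, 0 ≤ μ → 0 < rashRatio σ γ μ) := by

  have hpi := Real.pi_pos
  refine ⟨?_, fun μ _ => rash_pos hσ hγ μ⟩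
  by_cases hall : ∀ μ : ℝ, 0 ≤ μ → Real.pi ≤ FF σ γ μ
  · exact ⟨0, le_refl 0,
      fun μ hμ => rash_le ((FF_le_pi σ γ 0).trans (hall μ hμ)), rash_pos hσ hγ 0⟩
  push_neg at hall
  obtain ⟨μ₁, hμ₁0, hμ₁⟩ := hall
  set v := FF σ γ μ₁ with hv
  have hv0 : 0 ≤ v := FF_nonneg σ γ μ₁
  -- small-μ plateau
  have hq : ContinuousAt (fun μ : ℝ => Phi (μ/σ)) 0 :=
    (Phi_cont.comp (continuous_id.div_const σ)).continuousAt
  have hq0 : ∀ᶠ μ : ℝ in 𝓝 0, Phi (μ/σ) < 1/2 + γ := by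
    apply hq.eventually_lt continuousAt_const
    simpa [Phi_zero] using hγ
  obtain ⟨ε, hε0, hε⟩ := Metric.eventually_nhds_iff.mp hq0
  have plateau : ∀ μ : ℝ, 0 ≤ μ → μ < ε → Real.pi ≤ FF σ γ μ := by
    intro μ hμ0 hμε
    have h1 : ∀ θ ∈ Icc (0:ℝ) Real.pi, redErr μ σ θ ≤ γ := by
      intro θ _
      have h2 := redErr_le_half hσ hμ0 θ
      have h3 : Phi (μ/σ) < 1/2 + γ := hε (by simpa [Real.dist_eq, abs_of_nonneg hμ0] using hμε)
      linarith
    have := FF_lower (le_refl 0) hpi.le (le_refl Real.pi) h1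
    linarith
  -- decay at infinity
  set δ := min ((Real.pi - v)/4) 1 with hδdef
  have hδ0 : 0 < δ := lt_min (by linarith) one_pos
  have hδ1 : δ ≤ 1 := min_le_right _ _
  have hδv : δ ≤ (Real.pi - v)/4 := min_le_left _ _
  have hδhalf : δ ≤ Real.pi/2 := by nlinarith [Real.pi_gt_three]
  set C := 1/(σ * Real.sin δ) with hC
  have hsinδ : 0 < Real.sin δ := Real.sin_pos_of_pos_of_lt_pi hδ0 (by nlinarith [Real.pi_gt_three])
  obtain ⟨x₀, hx₀⟩ := eventually_atTop.mp
    (Phi_tendsto_one.eventually (eventually_gt_nhds (show 1 - γ < 1 by linarith)))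
  set M := max (σ*(x₀ + C)) (μ₁ + 1) with hM
  have hμ₁M : μ₁ < M := lt_of_lt_of_le (by linarith) (le_max_right _ _)
  have hdecay : ∀ μ : ℝ, M ≤ μ → v < FF σ γ μ := by
    intro μ hμM
    have harg : x₀ ≤ μ/σ - C := by
      have h1 : σ*(x₀ + C) ≤ μ := le_trans (le_max_left _ _) hμM
      have h2 : x₀ + C ≤ μ/σ := (le_div_iff₀ hσ).mpr (by nlinarith)
      linarith
    have hPhi : 1 - γ < Phi (μ/σ - C) := hx₀ _ harg
    have h1 : ∀ θ ∈ Icc δ (Real.pi - δ), redErr μ σ θ ≤ γ := by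
      intro θ hθ
      have hsθ : Real.sin δ ≤ Real.sin θ := sin_lower hδ0 hδhalf hθ
      have hsθ0 : 0 < Real.sin θ := lt_of_lt_of_le hsinδ hsθ
      have habs : |Real.cos θ/(σ*Real.sin θ)| ≤ C := by
        rw [abs_div, abs_of_pos (show (0:ℝ) < σ*Real.sin θ by positivity), hC]
        apply div_le_div₀ (by positivity) (Real.abs_cos_le_one θ) (by positivity)
        apply mul_le_mul_of_nonneg_left hsθ hσ.le
      have := redErr_le_decay (μ := μ) hσ.ne' hsθ0.ne' habs
      linarith
    have := FF_lower hδ0.le (by linarith) (by linarith) h1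
    linarith
  -- ε ≤ μ₁ (plateau excludes μ₁)
  have hεμ₁ : ε ≤ μ₁ := by
    by_contra h
    push_neg at h
    exact absurd (plateau μ₁ hμ₁0 h) (by linarith)
  -- compact minimum on [ε/2, M]
  have hcompact : IsCompact (Icc (ε/2) M) := isCompact_Icc
  have hne : (Icc (ε/2) M).Nonempty := ⟨μ₁, by constructor <;> linarith⟩
  have hcont : ContinuousOn (FF σ γ) (Icc (ε/2) M) := by
    intro x hx
    exact (FF_contAt hσ (lt_of_lt_of_le (by linarith) hx.1)).continuousWithinAt
  obtain ⟨μs, hμs_mem, hμs_min⟩ := hcompact.exists_isMinOn hne hcont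
  refine ⟨μs, by linarith [hμs_mem.1], ?_, rash_pos hσ hγ μs⟩
  intro μ hμ0
  apply rash_le
  rcases lt_or_ge μ ε with h | h
  · exact le_trans (le_trans (hμs_min (⟨by linarith, hμ₁M.le⟩ : μ₁ ∈ Icc (ε/2) M)) hμ₁.le)
      (plateau μ hμ0 h)
  rcases le_or_gt μ M with h2 | h2
  · exact hμs_min (⟨by linarith, h2⟩ : μ ∈ Icc (ε/2) M)
  · exact le_trans (hμs_min (⟨by linarith, hμ₁M.le⟩ : μ₁ ∈ Icc (ε/2) M)) (hdecay μ h2.le).le
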